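/- Let τ ≥ 0 and let V ~ χ²_n. Then P(V ≤ n/(τ² + 1)) ≤ exp(-(n/4)·(τ²/(τ² + 1))²). -/

import Mathlib

open MeasureTheory ProbabilityTheory
open scoped ENNReal

/-- The chi-squared distribution with `n` degrees of freedom, as a Gamma
distribution with shape `n/2` and rate `1/2`. -/
noncomputable def chiSqMeasure (n : ℕ) : Measure ℝ :=
  gammaMeasure ((n : ℝ) / 2) (1 / 2)

lemma aux_log_ineq {x : ℝ} (h0 : 0 ≤ x) (h1 : x < 1) :
    Real.log (1 - x) ≤ -x - x ^ 2 / 2 := by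
  set g : ℝ → ℝ := fun y => -y - y ^ 2 / 2 - Real.log (1 - y) with hgdef
  have hd : ∀ y : ℝ, y < 1 → HasDerivAt g (-1 - y + (1 - y)⁻¹) y := by
    intro y hy
    have hne : (1 : ℝ) - y ≠ 0 := by intro h; linarith [sub_eq_zero.mp h]
    have h1' : HasDerivAt (fun y : ℝ => 1 - y) (-1) y := (hasDerivAt_id y).const_sub 1
    have h2 : HasDerivAt (fun y : ℝ => Real.log (1 - y)) ((1 - y)⁻¹ * -1) y :=
      (Real.hasDerivAt_log hne).comp y h1'
    have h3 : HasDerivAt (fun y : ℝ => -y - y ^ 2 / 2) (-1 - y) y := by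
      have := ((hasDerivAt_id y).neg.sub (((hasDerivAt_id y).pow 2).div_const 2))
      refine this.congr_deriv ?_
      simp
    have := h3.sub h2
    refine this.congr_deriv ?_
    ring
  have hmono : MonotoneOn g (Set.Icc 0 x) := by
    apply monotoneOn_of_deriv_nonneg (convex_Icc 0 x)
    · intro y hy
      exact (hd y (lt_of_le_of_lt hy.2 h1)).continuousAt.continuousWithinAt
    · intro y hy
      rw [interior_Icc] at hy
      exact (hd y (lt_trans hy.2 h1)).differentiableAt.differentiableWithinAt
    · intro y hy
      rw [interior_Icc] at hy
      rw [(hd y (lt_trans hy.2 h1)).deriv]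
      have h1y : (0 : ℝ) < 1 - y := by linarith [hy.2]
      have key : -1 - y + (1 - y)⁻¹ = y ^ 2 / (1 - y) := by
        field_simp
        ring
      rw [key]
      positivity
  have h0x : (0 : ℝ) ∈ Set.Icc (0 : ℝ) x := Set.left_mem_Icc.mpr h0
  have hxx : x ∈ Set.Icc (0 : ℝ) x := Set.right_mem_Icc.mpr h0
  have := hmono h0x hxx h0
  simp only [hgdef] at this
  norm_num at this
  linarith

theorem stmt_4 (n : ℕ) (hn : 0 < n) (τ : ℝ) (hτ : 0 ≤ τ) :
    chiSqMeasure n (Set.Iic ((n : ℝ) / (τ ^ 2 + 1))) ≤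
      ENNReal.ofReal (Real.exp (-((n : ℝ) / 4) * (τ ^ 2 / (τ ^ 2 + 1)) ^ 2)) := by
  have hn' : (0 : ℝ) < n := Nat.cast_pos.mpr hn
  have hs : (0 : ℝ) < τ ^ 2 + 1 := by positivity
  set r : ℝ := (n : ℝ) / 2 with hrdef
  have hr : 0 < r := by positivity
  set t : ℝ := τ ^ 2 / 2 with htdef
  have ht : 0 ≤ t := by positivity
  set a : ℝ := (n : ℝ) / (τ ^ 2 + 1) with hadef
  have hl' : (0 : ℝ) < 1 / 2 + t := by positivity
  set c : ℝ := ((1 : ℝ) / 2) ^ r / ((1 / 2 + t) : ℝ) ^ r with hcdef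
  have hc : 0 < c := div_pos (Real.rpow_pos_of_pos (by norm_num) r) (Real.rpow_pos_of_pos hl' r)
  have hne : ((1 : ℝ) / 2 + t) ^ r ≠ 0 := (Real.rpow_pos_of_pos hl' r).ne'
  have hmeas : chiSqMeasure n (Set.Iic a) = ∫⁻ x in Set.Iic a, gammaPDF r (1/2) x := by
    rw [chiSqMeasure, gammaMeasure, withDensity_apply _ measurableSet_Iic]
  rw [hmeas]
  have hx01 : τ ^ 2 / (τ ^ 2 + 1) < 1 := by
    rw [div_lt_one hs]; linarith
  have hx0 : 0 ≤ τ ^ 2 / (τ ^ 2 + 1) := by positivity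
  calc ∫⁻ x in Set.Iic a, gammaPDF r (1/2) x
      ≤ ∫⁻ x in Set.Iic a, ENNReal.ofReal (Real.exp (t * (a - x))) * gammaPDF r (1/2) x := by
        apply setLIntegral_mono' measurableSet_Iic
        intro x hx
        have h1 : (1 : ℝ≥0∞) ≤ ENNReal.ofReal (Real.exp (t * (a - x))) := by
          rw [show (1 : ℝ≥0∞) = ENNReal.ofReal 1 by simp]
          exact ENNReal.ofReal_le_ofReal
            (Real.one_le_exp (mul_nonneg ht (sub_nonneg.mpr hx)))
        exact le_mul_of_one_le_left zero_le h1
    _ ≤ ∫⁻ x, ENNReal.ofReal (Real.exp (t * (a - x))) * gammaPDF r (1/2) x :=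
        setLIntegral_le_lintegral _ _
    _ = ∫⁻ x, ENNReal.ofReal (Real.exp (t * a) * c) * gammaPDF r (1/2 + t) x := by
        apply lintegral_congr
        intro x
        by_cases hx : 0 ≤ x
        · rw [gammaPDF_of_nonneg hx, gammaPDF_of_nonneg hx,
            ← ENNReal.ofReal_mul (Real.exp_nonneg _),
            ← ENNReal.ofReal_mul (mul_nonneg (Real.exp_nonneg _) hc.le)]
          congr 1
          have hcc : c * ((1 : ℝ) / 2 + t) ^ r = ((1 : ℝ) / 2) ^ r := div_mul_cancel₀ _ hne
          have he1 : Real.exp (t * (a - x)) = Real.exp (t * a) * Real.exp (-(t * x)) := by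
            rw [← Real.exp_add]; ring_nf
          have he2 : Real.exp (-((1/2 + t) * x)) = Real.exp (-(t * x)) * Real.exp (-(1/2 * x)) := by
            rw [← Real.exp_add]; ring_nf
          rw [he1, he2]
          rw [← hcc]
          ring
        · rw [gammaPDF_of_neg (not_le.mp hx), gammaPDF_of_neg (not_le.mp hx), mul_zero, mul_zero]
    _ = ENNReal.ofReal (Real.exp (t * a) * c) := by
        rw [lintegral_const_mul' _ _ ENNReal.ofReal_ne_top,
          lintegral_gammaPDF_eq_one hr hl', mul_one]
    _ ≤ ENNReal.ofReal (Real.exp (-((n : ℝ) / 4) * (τ ^ 2 / (τ ^ 2 + 1)) ^ 2)) := by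
        apply ENNReal.ofReal_le_ofReal
        rw [← Real.exp_log hc, ← Real.exp_add, Real.exp_le_exp]
        have hlogc : Real.log c = -r * Real.log (τ ^ 2 + 1) := by
          rw [hcdef, Real.log_div (Real.rpow_pos_of_pos (by norm_num) r).ne' hne,
            Real.log_rpow (by norm_num : (0:ℝ) < 1/2), Real.log_rpow hl',
            show (1 : ℝ)/2 + t = (τ ^ 2 + 1) / 2 by rw [htdef]; ring,
            Real.log_div hs.ne' (by norm_num),
            Real.log_div (by norm_num) (by norm_num), Real.log_one]
          ring
        have hlog1 : Real.log (1 - τ ^ 2 / (τ ^ 2 + 1)) = -Real.log (τ ^ 2 + 1) := by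
          rw [show (1 : ℝ) - τ ^ 2 / (τ ^ 2 + 1) = (τ ^ 2 + 1)⁻¹ by field_simp; ring,
            Real.log_inv]
        have hkey := aux_log_ineq hx0 hx01
        rw [hlog1] at hkey
        have hta : t * a = r * (τ ^ 2 / (τ ^ 2 + 1)) := by
          rw [htdef, hadef, hrdef]; field_simp
        rw [hlogc, hta]
        have hfac : 0 ≤ r * (Real.log (τ ^ 2 + 1) - τ ^ 2 / (τ ^ 2 + 1) -
            (τ ^ 2 / (τ ^ 2 + 1)) ^ 2 / 2) := mul_nonneg hr.le (by linarith)
        nlinarith [hfac]
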